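/- For any poly-cyclic group G, there exist natural numbers p₁, …, p_r, each either a prime or 0, such that G embeds into the iterated wreath product Z_{p₁} ≀ Z_{p₂} ≀ ⋯ ≀ Z_{p_r}, where Z_0 := Z (the infinite cyclic group) and Z_p is cyclic of order p for p prime. -/

import Mathlib

def wreathAct (H G : Type*) [Group H] [Group G] : G →* MulAut (G → H) where
  toFun g :=
    { toFun := fun F x => F (g⁻¹ * x)
      invFun := fun F x => F (g * x)
      left_inv := fun F => by funext x; simp [mul_assoc]
      right_inv := fun F => by funext x; simp [mul_assoc]
      map_mul' := fun F₁ F₂ => rfl }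
  map_one' := by ext F x; simp
  map_mul' := fun g₁ g₂ => by ext F x; simp [mul_assoc]

/-- The unrestricted wreath product `H ≀ G = Hᴳ ⋊ G`. -/
abbrev Wreath (H G : Type*) [Group H] [Group G] := SemidirectProduct (G → H) G (wreathAct H G)


/-- A group bundled with its group structure. -/
structure GroupBundle : Type 1 where
  carrier : Type
  [str : Group carrier]

attribute [instance] GroupBundle.str

/-- `iterWreathFrom W [A₁, …, Aₖ] = ((W ≀ A₁) ≀ A₂) ≀ ⋯ ≀ Aₖ` (left-nested). -/
def iterWreathFrom : GroupBundle → List GroupBundle → GroupBundle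
  | W, [] => W
  | W, A :: rest => iterWreathFrom ⟨Wreath W.carrier A.carrier⟩ rest

/-- The left-nested iterated wreath product of a list of groups:
`[H₁, H₂, …, Hₖ] ↦ ((H₁ ≀ H₂) ≀ H₃) ≀ ⋯ ≀ Hₖ`, the trivial group for the empty list. -/
def iterWreathList : List GroupBundle → GroupBundle
  | [] => ⟨PUnit⟩
  | A :: rest => iterWreathFrom A rest

section Lemmas

variable {H H' B B' : Type*} [Group H] [Group H'] [Group B] [Group B']

@[simp] theorem wreathAct_apply (g : B) (F : B → H) (x : B) :
    wreathAct H B g F x = F (g⁻¹ * x) := rfl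

/-- Left functoriality of the wreath product. -/
def wreathMapLeft (e : H →* H') : Wreath H B →* Wreath H' B where
  toFun x := ⟨fun b => e (x.left b), x.right⟩
  map_one' := by ext <;> simp
  map_mul' x y := by ext b <;> simp

theorem wreathMapLeft_injective (e : H →* H') (he : Function.Injective e) :
    Function.Injective (wreathMapLeft (B := B) e) := by
  intro x y h
  have h1 := congrArg SemidirectProduct.left h
  have h2 := congrArg SemidirectProduct.right h
  ext b
  · exact he (congrFun h1 b)
  · exact h2

/-- Right functoriality of the wreath product along an injective map. -/
noncomputable def wreathMapRight (φ : B' →* B) (hφ : Function.Injective φ) :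
    Wreath H B' →* Wreath H B where
  toFun x := ⟨Function.extend φ x.left 1, φ x.right⟩
  map_one' := by
    ext b
    · simp only [SemidirectProduct.one_left]
      by_cases h : ∃ y, φ y = b
      · obtain ⟨y, rfl⟩ := h
        simp [hφ.extend_apply]
      · simp [Function.extend_apply' _ _ _ h]
    · simp
  map_mul' x y := by
    ext b
    · simp only [SemidirectProduct.mul_left, Pi.mul_apply, wreathAct_apply]
      by_cases h : ∃ z, φ z = b
      · obtain ⟨z, rfl⟩ := h
        rw [← map_inv, ← map_mul, hφ.extend_apply, hφ.extend_apply, hφ.extend_apply]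
        simp
      · have h' : ¬ ∃ z, φ z = (φ x.right)⁻¹ * b := by
          rintro ⟨z, hz⟩
          exact h ⟨x.right * z, by rw [map_mul, hz, mul_inv_cancel_left]⟩
        rw [Function.extend_apply' _ _ _ h, Function.extend_apply' _ _ _ h,
          Function.extend_apply' _ _ _ h']
        simp [Pi.one_apply]
    · simp

theorem wreathMapRight_injective (φ : B' →* B) (hφ : Function.Injective φ) :
    Function.Injective (wreathMapRight (H := H) φ hφ) := by
  intro x y h
  have h1 := congrArg SemidirectProduct.left h
  have h2 := congrArg SemidirectProduct.right h
  ext b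
  · have := congrFun h1 (φ b)
    simpa [wreathMapRight, hφ.extend_apply] using this
  · exact hφ h2

end Lemmas
section KK

variable {G H : Type*} [Group G] [Group H] (N : Subgroup G) [N.Normal] (e : ↥N →* H)

/-- The element `σ(x)⁻¹ g σ((π g)⁻¹ x)` of `N` used in the Kaloujnine–Krasner embedding. -/
noncomputable def kkElt (g : G) (x : G ⧸ N) : ↥N :=
  ⟨x.out⁻¹ * g * ((QuotientGroup.mk g : G ⧸ N)⁻¹ * x).out, by
    rw [← QuotientGroup.eq_one_iff]
    simp only [QuotientGroup.mk_mul, QuotientGroup.mk_inv, QuotientGroup.out_eq']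
    group⟩

/-- The Kaloujnine–Krasner embedding `G →* H ≀ (G ⧸ N)` induced by `e : N →* H`. -/
noncomputable def kkHom : G →* Wreath H (G ⧸ N) where
  toFun g := ⟨fun x => e (kkElt N g x), QuotientGroup.mk g⟩
  map_one' := by
    ext x
    · show e (kkElt N 1 x) = 1
      have : kkElt N 1 x = 1 := by
        ext
        simp [kkElt]
      rw [this, map_one]
    · simp
  map_mul' g h := by
    ext x
    · show e (kkElt N (g * h) x) = e (kkElt N g x) * e (kkElt N h ((QuotientGroup.mk g : G ⧸ N)⁻¹ * x))
      rw [← map_mul]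
      congr 1
      ext
      show x.out⁻¹ * (g * h) * ((QuotientGroup.mk (g * h) : G ⧸ N)⁻¹ * x).out = _
      simp only [kkElt, MulMemClass.mk_mul_mk, QuotientGroup.mk_mul, mul_inv_rev, mul_assoc]
      group
    · simp

theorem kkHom_injective (he : Function.Injective e) : Function.Injective (kkHom N e) := by
  rw [injective_iff_map_eq_one]
  intro g hg
  have h2 : (QuotientGroup.mk g : G ⧸ N) = 1 := congrArg SemidirectProduct.right hg
  have h1 : e (kkElt N g (1 : G ⧸ N)) = 1 :=
    congrFun (congrArg SemidirectProduct.left hg) (1 : G ⧸ N)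
  rw [injective_iff_map_eq_one] at he
  have h3 := he _ h1
  have h4 : ((1 : G ⧸ N).out⁻¹ * g * ((QuotientGroup.mk g : G ⧸ N)⁻¹ * 1).out : G) = 1 :=
    congrArg Subtype.val h3
  rw [h2, inv_one, one_mul] at h4
  have : g = (1 : G ⧸ N).out * ((1 : G ⧸ N).out⁻¹ * g * (1 : G ⧸ N).out) * (1 : G ⧸ N).out⁻¹ := by
    group
  rw [this, h4]
  group

end KK
section Iter

/-- Equal bundles have isomorphic carriers. -/
def mulEquivOfBundleEq : ∀ {B₁ B₂ : GroupBundle}, B₁ = B₂ → B₁.carrier ≃* B₂.carrier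
  | _, _, rfl => MulEquiv.refl _

theorem iterWreathFrom_embed :
    ∀ (l : List GroupBundle) (W₁ W₂ : GroupBundle) (e : W₁.carrier →* W₂.carrier),
      Function.Injective e →
      ∃ f : (iterWreathFrom W₁ l).carrier →* (iterWreathFrom W₂ l).carrier,
        Function.Injective f
  | [], W₁, W₂, e, he => ⟨e, he⟩
  | A :: rest, W₁, W₂, e, he =>
    iterWreathFrom_embed rest ⟨Wreath W₁.carrier A.carrier⟩ ⟨Wreath W₂.carrier A.carrier⟩
      (wreathMapLeft e) (wreathMapLeft_injective e he)

theorem punit_wreath_embed (B : Type*) [Group B] :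
    ∃ f : Wreath PUnit B →* B, Function.Injective f := by
  refine ⟨SemidirectProduct.rightHom, fun x y h => ?_⟩
  exact SemidirectProduct.ext (Subsingleton.elim _ _) h

theorem punit_base_embed (l : List GroupBundle) :
    ∃ f : (iterWreathFrom ⟨PUnit⟩ l).carrier →* (iterWreathList l).carrier,
      Function.Injective f := by
  cases l with
  | nil => exact ⟨MonoidHom.id _, fun a b h => h⟩
  | cons A rest =>
    obtain ⟨e, he⟩ := punit_wreath_embed A.carrier
    exact iterWreathFrom_embed rest ⟨Wreath PUnit A.carrier⟩ A e he

theorem iterWreathFrom_append (W : GroupBundle) (l₁ l₂ : List GroupBundle) :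
    iterWreathFrom W (l₁ ++ l₂) = iterWreathFrom (iterWreathFrom W l₁) l₂ := by
  induction l₁ generalizing W with
  | nil => rfl
  | cons A rest ih => exact ih _

theorem list_append_embed (l₀ l₁ : List GroupBundle) :
    ∃ f : (iterWreathFrom (iterWreathList l₀) l₁).carrier →*
        (iterWreathList (l₀ ++ l₁)).carrier,
      Function.Injective f := by
  cases l₀ with
  | nil => exact punit_base_embed l₁
  | cons A rest =>
    refine ⟨(mulEquivOfBundleEq ?_).toMonoidHom, ?_⟩
    · exact (iterWreathFrom_append A rest l₁).symm
    · exact (mulEquivOfBundleEq _).injective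
end Iter
section Refine

/-- Bundle `Multiplicative (ZMod p)`. -/
def zBundle (p : ℕ) : GroupBundle := ⟨Multiplicative (ZMod p)⟩

theorem refine_embed (n : ℕ) :
    ∀ (G : Type) [Group G] (N : Subgroup G) [N.Normal],
      IsCyclic (G ⧸ N) → Nat.card (G ⧸ N) = n →
      ∀ (W : GroupBundle) (e : ↥N →* W.carrier), Function.Injective e →
      ∃ q : List ℕ, (∀ m ∈ q, m.Prime ∨ m = 0) ∧
        ∃ f : G →* (iterWreathFrom W (q.map zBundle)).carrier, Function.Injective f := by
  induction n using Nat.strong_induction_on with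
  | _ n ih =>
  intro G _ N _ hc hn W e he
  haveI : IsCyclic (G ⧸ N) := hc
  rcases eq_or_ne n 1 with rfl | hn1
  · -- trivial quotient : G = N
    have hsub : Subsingleton (G ⧸ N) := (Nat.card_eq_one_iff_unique.mp hn).1
    have hmem : ∀ g : G, g ∈ N := fun g =>
      (QuotientGroup.eq_one_iff g).mp (Subsingleton.elim _ _)
    let j : G →* ↥N :=
      { toFun := fun g => ⟨g, hmem g⟩
        map_one' := rfl
        map_mul' := fun _ _ => rfl }
    refine ⟨[], by simp, e.comp j, he.comp fun a b h => ?_⟩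
    exact congrArg Subtype.val h
  rcases eq_or_ne n 0 with rfl | hn0
  · -- infinite cyclic quotient
    refine ⟨[Nat.card (G ⧸ N)], by simp [hn], ?_⟩
    let φ := (zmodCyclicMulEquiv hc).symm
    have hφ : Function.Injective φ.toMonoidHom := fun a b h => φ.injective h
    show ∃ f : G →* Wreath W.carrier (Multiplicative (ZMod (Nat.card (G ⧸ N)))),
      Function.Injective f
    exact ⟨(wreathMapRight (H := W.carrier) φ.toMonoidHom hφ).comp (kkHom N e),
      (wreathMapRight_injective φ.toMonoidHom hφ).comp (kkHom_injective N e he)⟩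
  -- n ≥ 2
  have hfin : Finite (G ⧸ N) := Nat.finite_of_card_ne_zero (hn ▸ hn0)
  set p := n.minFac with hp_def
  have hp : p.Prime := Nat.minFac_prime hn1
  haveI : Fact p.Prime := ⟨hp⟩
  obtain ⟨g, hg⟩ := exists_prime_orderOf_dvd_card' p (by rw [hn]; exact n.minFac_dvd)
  set K := Subgroup.zpowers g with hK_def
  have hcardK : Nat.card K = p := (Nat.card_zpowers g).trans hg
  letI : CommGroup (G ⧸ N) := IsCyclic.commGroup
  haveI hKn : K.Normal := Subgroup.normal_of_comm K
  set M := K.comap (QuotientGroup.mk' N) with hM_def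
  haveI hMn : M.Normal := hKn.comap _
  have hNM : N ≤ M := fun x hx => by
    simp only [hM_def, Subgroup.mem_comap]
    rw [QuotientGroup.mk'_apply, QuotientGroup.eq_one_iff x |>.mpr hx]
    exact one_mem K
  -- prime-order cyclic quotient M / N
  let φM : ↥M →* G ⧸ N := (QuotientGroup.mk' N).comp M.subtype
  have hker : φM.ker = N.subgroupOf M := by
    ext x
    simp [φM, MonoidHom.mem_ker, Subgroup.mem_subgroupOf, QuotientGroup.eq_one_iff]
  have hrange : φM.range = K := by
    rw [MonoidHom.range_comp, Subgroup.range_subtype, hM_def,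
      Subgroup.map_comap_eq_self_of_surjective (QuotientGroup.mk'_surjective N)]
  haveI hN'n : (N.subgroupOf M).Normal := hker ▸ φM.normal_ker
  let ψ : (↥M ⧸ N.subgroupOf M) ≃* ↥K :=
    (QuotientGroup.quotientMulEquivOfEq hker.symm).trans
      ((QuotientGroup.quotientKerEquivRange φM).trans (MulEquiv.subgroupCongr hrange))
  haveI : IsCyclic (↥M ⧸ N.subgroupOf M) := isCyclic_of_surjective ψ.symm ψ.symm.surjective
  have hcardQ : Nat.card (↥M ⧸ N.subgroupOf M) = p := by
    rw [Nat.card_congr ψ.toEquiv]; exact hcardK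
  let eN : ↥(N.subgroupOf M) →* ↥N := (Subgroup.subgroupOfEquivOfLe hNM).toMonoidHom
  let φq := (zmodCyclicMulEquiv (inferInstance : IsCyclic (↥M ⧸ N.subgroupOf M))).symm
  have hφq : Function.Injective φq.toMonoidHom := fun a b h => φq.injective h
  let e₂ : ↥M →* Wreath W.carrier (Multiplicative (ZMod (Nat.card (↥M ⧸ N.subgroupOf M)))) :=
    (wreathMapRight φq.toMonoidHom hφq).comp (kkHom (N.subgroupOf M) (e.comp eN))
  have he₂ : Function.Injective e₂ :=
    (wreathMapRight_injective φq.toMonoidHom hφq).comp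
      (kkHom_injective _ _ (he.comp (Subgroup.subgroupOfEquivOfLe hNM).injective))
  -- quotient G / M
  have hmap : M.map (QuotientGroup.mk' N) = K :=
    Subgroup.map_comap_eq_self_of_surjective (QuotientGroup.mk'_surjective N) K
  haveI : (M.map (QuotientGroup.mk' N)).Normal := hmap ▸ hKn
  let χ : ((G ⧸ N) ⧸ M.map (QuotientGroup.mk' N)) ≃* G ⧸ M :=
    QuotientGroup.quotientQuotientEquivQuotient N M hNM
  haveI : IsCyclic ((G ⧸ N) ⧸ M.map (QuotientGroup.mk' N)) :=
    isCyclic_of_surjective _ (QuotientGroup.mk'_surjective (M.map (QuotientGroup.mk' N)))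
  haveI : IsCyclic (G ⧸ M) := isCyclic_of_surjective χ χ.surjective
  have hcard2 : Nat.card (G ⧸ M) * p = n := by
    have h1 := Subgroup.card_eq_card_quotient_mul_card_subgroup (M.map (QuotientGroup.mk' N))
    rw [hmap] at h1
    have h2 : Nat.card ((G ⧸ N) ⧸ M.map (QuotientGroup.mk' N)) = Nat.card (G ⧸ M) :=
      Nat.card_congr χ.toEquiv
    rw [hmap] at h2
    rw [← hn, h1, h2, hcardK]
  have hlt : Nat.card (G ⧸ M) < n := by
    rcases Nat.eq_zero_or_pos (Nat.card (G ⧸ M)) with h | h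
    · omega
    · calc Nat.card (G ⧸ M) < Nat.card (G ⧸ M) * p :=
            (Nat.lt_mul_iff_one_lt_right h).mpr hp.one_lt
          _ = n := hcard2
  obtain ⟨q₂, hq₂, f₂, hf₂⟩ := ih (Nat.card (G ⧸ M)) hlt G M inferInstance rfl
    ⟨Wreath W.carrier (Multiplicative (ZMod (Nat.card (↥M ⧸ N.subgroupOf M))))⟩ e₂ he₂
  refine ⟨Nat.card (↥M ⧸ N.subgroupOf M) :: q₂, ?_, f₂, hf₂⟩
  intro m hm
  rcases List.mem_cons.mp hm with rfl | hm
  · exact Or.inl (hcardQ ▸ hp)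
  · exact hq₂ m hm

end Refine
section Main

theorem chain_embed (G : Type) [Group G] (r : ℕ) (s : Fin (r + 1) → Subgroup G)
    (hlast : s (Fin.last r) = ⊥)
    (hstep : ∀ i : Fin r, ∃ hn : ((s i.succ).subgroupOf (s i.castSucc)).Normal,
      letI := hn
      IsCyclic (↥(s i.castSucc) ⧸ (s i.succ).subgroupOf (s i.castSucc))) :
    ∀ k (hk : k ≤ r), ∃ q : List ℕ, (∀ m ∈ q, m.Prime ∨ m = 0) ∧
      ∃ f : ↥(s ⟨r - k, by omega⟩) →* (iterWreathList (q.map zBundle)).carrier,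
        Function.Injective f := by
  intro k
  induction k with
  | zero =>
    intro _
    have h : (⟨r - 0, by omega⟩ : Fin (r + 1)) = Fin.last r := by
      ext; simp [Fin.last]
    rw [h, hlast]
    exact ⟨[], by simp, 1, fun a b _ => Subsingleton.elim a b⟩
  | succ k ihk =>
    intro hk
    obtain ⟨q₀, hq₀, f₀, hf₀⟩ := ihk (by omega)
    set i : Fin r := ⟨r - (k + 1), by omega⟩ with hi_def
    have hisucc : i.succ = (⟨r - k, by omega⟩ : Fin (r + 1)) := by
      ext; simp [Fin.succ, hi_def]; omega
    have hicast : i.castSucc = (⟨r - (k + 1), by omega⟩ : Fin (r + 1)) := by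
      ext; simp [hi_def]
    obtain ⟨hn, hcyc⟩ := hstep i
    haveI := hn
    haveI := hcyc
    let j : ↥((s i.succ).subgroupOf (s i.castSucc)) →* ↥(s (⟨r - k, by omega⟩ : Fin (r + 1))) :=
      { toFun := fun x => ⟨((x : ↥(s i.castSucc)) : G), by rw [← hisucc]; exact x.2⟩
        map_one' := rfl
        map_mul' := fun _ _ => rfl }
    have hj : Function.Injective j := fun a b h =>
      Subtype.ext (Subtype.ext
        (congrArg (fun z : ↥(s (⟨r - k, by omega⟩ : Fin (r + 1))) => (z : G)) h))
    have hcomp : Function.Injective (f₀.comp j) := by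
      intro a b h
      exact hj (hf₀ h)
    obtain ⟨q₁, hq₁, f₁, hf₁⟩ := refine_embed
      (Nat.card (↥(s i.castSucc) ⧸ (s i.succ).subgroupOf (s i.castSucc)))
      ↥(s i.castSucc) ((s i.succ).subgroupOf (s i.castSucc)) hcyc rfl
      (iterWreathList (q₀.map zBundle)) (f₀.comp j) hcomp
    obtain ⟨jap, hjap⟩ := list_append_embed (q₀.map zBundle) (q₁.map zBundle)
    refine ⟨q₀ ++ q₁, ?_, ?_⟩
    · intro m hm
      rcases List.mem_append.mp hm with h | h
      · exact hq₀ m h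
      · exact hq₁ m h
    · rw [← hicast, List.map_append]
      have hjc : Function.Injective (jap.comp f₁) := by
        intro a b h
        exact hf₁ (hjap h)
      exact ⟨jap.comp f₁, hjc⟩

end Main
/-- A group `G` is poly-cyclic if it admits a subnormal series with all successive
quotients cyclic. -/
def IsPolycyclic (G : Type) [Group G] : Prop :=
  ∃ (r : ℕ) (s : Fin (r + 1) → Subgroup G),
    s 0 = ⊤ ∧ s (Fin.last r) = ⊥ ∧
    ∀ i : Fin r, ∃ hn : ((s i.succ).subgroupOf (s i.castSucc)).Normal,
      letI := hn
      IsCyclic (↥(s i.castSucc) ⧸ (s i.succ).subgroupOf (s i.castSucc))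

/-- For any poly-cyclic group `G` there exist natural numbers `p₁, …, p_r`, each prime
or `0`, such that `G` embeds into the left-nested iterated wreath product
`Z_{p₁} ≀ Z_{p₂} ≀ ⋯ ≀ Z_{p_r}`, where `Z_0 = ZMod 0 = ℤ` is infinite cyclic and
`Z_p = ZMod p` is cyclic of order `p` for `p` prime. -/
theorem stmt12 (G : Type) [Group G] (hpc : IsPolycyclic G) :
    ∃ (r : ℕ) (p : Fin r → ℕ), (∀ i, (p i).Prime ∨ p i = 0) ∧
      ∃ f : G →*
          (iterWreathList
            (List.ofFn fun i : Fin r =>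
              (⟨Multiplicative (ZMod (p i))⟩ : GroupBundle))).carrier,
        Function.Injective f := by
  obtain ⟨r, s, h0, hlast, hstep⟩ := hpc
  have H := chain_embed G r s hlast hstep r le_rfl
  have h00 : (⟨r - r, by omega⟩ : Fin (r + 1)) = 0 := by ext; simp
  rw [h00, h0] at H
  obtain ⟨q, hq, f, hf⟩ := H
  have hlist : (List.ofFn fun i : Fin q.length =>
      (⟨Multiplicative (ZMod (q.get i))⟩ : GroupBundle)) = q.map zBundle := by
    rw [show (fun i : Fin q.length => (⟨Multiplicative (ZMod (q.get i))⟩ : GroupBundle))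
      = zBundle ∘ q.get from rfl, ← List.map_ofFn, List.ofFn_get]
  refine ⟨q.length, q.get, fun i => hq _ (by exact List.get_mem q i), ?_⟩
  rw [hlist]
  refine ⟨f.comp Subgroup.topEquiv.symm.toMonoidHom, ?_⟩
  intro a b h
  exact Subgroup.topEquiv.symm.injective (hf h)
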